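/- Let k be a field and x₁,…,x₅ ∈ k. Consider the 6×6 antisymmetric matrix G with rows (0,0,0,x₁,0,x₃), (0,0,x₁,2x₂,0,x₄), (0,−x₁,0,0,−x₃,0), (−x₁,−2x₂,0,0,−x₄,0), (0,0,x₃,x₄,0,2x₅), (−x₃,−x₄,0,0,−2x₅,0). Then det(G) = 4·(x₁²x₅ − x₁x₃x₄ + x₂x₃²)². Consequently, if char(k) = 2 then det(G) = 0 for all choices of x₁,…,x₅, while if char(k) ≠ 2 then x₁ = x₅ = 1, x₂ = x₃ = x₄ = 0 gives det(G) = 4 ≠ 0. -/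

import Mathlib

open Matrix

/-- Gram matrix of `σ_λ` for the class `C₃(a₁)` in type `F₄`. -/
def F4C3a1Gram {k : Type*} [Field k] (x₁ x₂ x₃ x₄ x₅ : k) :
    Matrix (Fin 6) (Fin 6) k :=
  !![0, 0, 0, x₁, 0, x₃;
     0, 0, x₁, 2*x₂, 0, x₄;
     0, -x₁, 0, 0, -x₃, 0;
     -x₁, -2*x₂, 0, 0, -x₄, 0;
     0, 0, x₃, x₄, 0, 2*x₅;
     -x₃, -x₄, 0, 0, -2*x₅, 0]


private lemma cons_val_five' {α : Type*} {m : ℕ} (x : α) (u : Fin (m+5) → α) :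
    Matrix.vecCons x u 5 = Matrix.vecHead (Matrix.vecTail (Matrix.vecTail (Matrix.vecTail (Matrix.vecTail u)))) :=
  rfl

set_option maxRecDepth 8000 in
set_option maxHeartbeats 2000000 in
lemma F4C3a1Gram_det_eq {k : Type*} [Field k] (x₁ x₂ x₃ x₄ x₅ : k) :
    (F4C3a1Gram x₁ x₂ x₃ x₄ x₅).det
        = 4 * (x₁ ^ 2 * x₅ - x₁ * x₃ * x₄ + x₂ * x₃ ^ 2) ^ 2 := by
  simp [F4C3a1Gram, Matrix.det_succ_row_zero, Fin.sum_univ_succ, Fin.succAbove, Fin.castSucc, Fin.castAdd, Fin.castLE, Fin.succ, Fin.coe_ofNat_eq_mod, Matrix.cons_val_succ, Matrix.cons_val_zero, Matrix.cons_val_one, Matrix.head_cons, Fin.mk_zero, Fin.mk_one, cons_val_five']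
  ring

theorem F4C3a1Gram_det {k : Type*} [Field k] (x₁ x₂ x₃ x₄ x₅ : k) :
    (F4C3a1Gram x₁ x₂ x₃ x₄ x₅).det
        = 4 * (x₁ ^ 2 * x₅ - x₁ * x₃ * x₄ + x₂ * x₃ ^ 2) ^ 2 ∧
    (ringChar k = 2 → (F4C3a1Gram x₁ x₂ x₃ x₄ x₅).det = 0) ∧
    (ringChar k ≠ 2 →
      (F4C3a1Gram (1 : k) 0 0 0 1).det = 4 ∧
      (F4C3a1Gram (1 : k) 0 0 0 1).det ≠ 0) := by
  refine ⟨F4C3a1Gram_det_eq .., ?_, ?_⟩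
  · intro h
    have h2 : (2 : k) = 0 := by
      have := ringChar.Nat.cast_ringChar (R := k); rw [h] at this; exact_mod_cast this
    rw [F4C3a1Gram_det_eq]
    have : (4 : k) = 2 * 2 := by norm_num
    rw [this, h2]; ring
  · intro h
    have h2 : (2 : k) ≠ 0 := by
      intro h0
      exact h (by exact_mod_cast (CharP.ringChar_of_prime_eq_zero Nat.prime_two h0))
    have : (F4C3a1Gram (1 : k) 0 0 0 1).det = 4 := by
      rw [F4C3a1Gram_det_eq]; ring
    refine ⟨this, ?_⟩
    rw [this]
    have : (4 : k) = 2 * 2 := by norm_num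
    rw [this]
    exact mul_ne_zero h2 h2
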